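/- (Correctness of S-Choose⊥) For all natural numbers lo and hi (without assuming lo ≤ hi), the generator assume (decide (lo ≤ hi)) (fun _ => choose lo hi) is a correct generator for the predicate fun v => lo ≤ v ∧ v ≤ hi; that is, for every natural number a, a ∈ ⟦assume (decide (lo ≤ hi)) (fun _ => choose lo hi)⟧ ↔ (lo ≤ a ∧ a ≤ hi). -/
import Mathlib

namespace PBT

inductive Gen : Type → Type 1 where
  | pure {α : Type} : α → Gen α
  | pick {α : Type} : Gen α → Gen α → Gen α
  | bind {α β : Type} : Gen α → (α → Gen β) → Gen β
  | indexed {α : Type} : (ℕ → Gen (Option α)) → Gen α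
  | assume {α : Type} : (b : Bool) → (b = true → Gen α) → Gen α

instance : Pure Gen := ⟨Gen.pure⟩
instance : Bind Gen := ⟨Gen.bind⟩

def Gen.support : {α : Type} → Gen α → Set α
  | _, .pure a' => {a | a = a'}
  | _, .pick x y => {a | a ∈ x.support ∨ a ∈ y.support}
  | _, .bind x f => {a | ∃ a', a' ∈ x.support ∧ a ∈ (f a').support}
  | _, .indexed f => {a | (∃ n, some a ∈ (f n).support) ∧
      (∀ a' n, some a' ∈ (f n).support → some a' ∈ (f (n + 1)).support)}
  | _, .assume b k => {a | ∃ h : b = true, a ∈ (k h).support}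

notation (priority := high) "⟦" g "⟧" => Gen.support g

def choose (lo hi : ℕ) : Gen ℕ :=
  if hi ≤ lo then .pure lo else .pick (.pure lo) (choose (lo + 1) hi)
termination_by hi - lo
decreasing_by omega

theorem choose_support (lo hi a : ℕ) (h : lo ≤ hi) :
    a ∈ ⟦choose lo hi⟧ ↔ lo ≤ a ∧ a ≤ hi := by
  unfold choose
  split
  · simp [Gen.support]; omega
  · rename_i h'
    have := choose_support (lo + 1) hi a (by omega)
    simp only [Gen.support, Set.mem_setOf_eq] at this ⊢
    rw [this]; omega
termination_by hi - lo
decreasing_by omega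

theorem s_choose_partial_correct (lo hi : ℕ) (a : ℕ) :
    a ∈ ⟦Gen.assume (decide (lo ≤ hi)) (fun _ => choose lo hi)⟧ ↔ lo ≤ a ∧ a ≤ hi := by
  simp only [Gen.support, Set.mem_setOf_eq, decide_eq_true_eq]
  constructor
  · rintro ⟨h, ha⟩; exact (choose_support lo hi a h).1 ha
  · intro h
    have hle : lo ≤ hi := le_trans h.1 h.2
    exact ⟨hle, (choose_support lo hi a hle).2 h⟩

end PBT
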